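/- With the same recursive definition, the genus-one values satisfy χ̃(1,1)(κ) = −1/12 + κ/2 and χ̃(1,2)(κ) = 1/24 − 7κ/24 + κ²/2; in particular, evaluating at κ=1 and multiplying by n! gives χ(Mbar_{1,1}) = 5/12 and χ(Mbar_{1,2}) = 1/2. -/

import Mathlib

/-- The Harer–Zagier orbifold Euler characteristic
`χ(M_{g,n}) = (−1)^n (2g−1) B_{2g}/(2g)! · (2g+n−3)!`
(with the standard conventions at `g = 0, 1`). -/
noncomputable def chiM (g n : ℕ) : ℚ :=
  (-1) ^ n * (2 * (g : ℚ) - 1) * bernoulli (2 * g) / (Nat.factorial (2 * g) : ℚ) *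
    (Nat.factorial (2 * g + n - 3) : ℚ)

/-- Formal antiderivative of a polynomial, vanishing at `0`. -/
noncomputable def pint (p : Polynomial ℚ) : Polynomial ℚ :=
  p.sum fun n a => Polynomial.C (a / ((n : ℚ) + 1)) * Polynomial.X ^ (n + 1)

lemma pint_add (p q : Polynomial ℚ) : pint (p + q) = pint p + pint q := by
  unfold pint
  apply Polynomial.sum_add_index <;> intros <;> simp [add_div, add_mul]

lemma pint_C_mul_X_pow (a : ℚ) (n : ℕ) :
    pint (Polynomial.C a * Polynomial.X ^ n) = Polynomial.C (a / (n+1)) * Polynomial.X ^ (n+1) := by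
  unfold pint
  rw [Polynomial.C_mul_X_pow_eq_monomial, Polynomial.sum_monomial_index]
  simp

lemma pint_C (a : ℚ) : pint (Polynomial.C a) = Polynomial.C a * Polynomial.X := by
  simpa using pint_C_mul_X_pow a 0

lemma pint_one : pint (1 : Polynomial ℚ) = Polynomial.X := by
  simpa using pint_C 1

lemma pint_C_mul_X (a : ℚ) :
    pint (Polynomial.C a * Polynomial.X) = Polynomial.C (a / 2) * Polynomial.X ^ 2 := by
  have := pint_C_mul_X_pow a 1; norm_num at this; simpa using this

/-- With `χ̃(g,n) ∈ ℚ[κ]` satisfying the quadratic recursion, the genus-one values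
are `χ̃(1,1) = −1/12 + κ/2` and `χ̃(1,2) = 1/24 − 7κ/24 + κ²/2`; in particular
evaluating at `κ = 1` and multiplying by `n!` gives `χ(Mbar_{1,1}) = 5/12` and
`χ(Mbar_{1,2}) = 1/2`. -/
theorem refined_euler_genus_one (X : ℕ → ℕ → Polynomial ℚ)
    (hrec : ∀ g n : ℕ, 2 < 2 * g + n →
      X g n = Polynomial.C (chiM g n / (Nat.factorial n : ℚ)) +
        Polynomial.C (1 / 2) * pint
          ((if g = 0 then 0 else
              Polynomial.C (((n + 2) * (n + 1) : ℕ) : ℚ) * X (g - 1) (n + 2)) +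
            ∑ g₁ ∈ Finset.range (g + 1), ∑ n₁ ∈ Finset.Icc 1 (n + 1),
              if 2 < 2 * g₁ + n₁ ∧ 2 < 2 * (g - g₁) + (n + 2 - n₁) then
                Polynomial.C ((n₁ * (n + 2 - n₁) : ℕ) : ℚ) *
                  (X g₁ n₁ * X (g - g₁) (n + 2 - n₁))
              else 0)) :
    X 1 1 = Polynomial.C (-1 / 12) + Polynomial.C (1 / 2) * Polynomial.X ∧
    X 1 2 = Polynomial.C (1 / 24) - Polynomial.C (7 / 24) * Polynomial.X +
      Polynomial.C (1 / 2) * Polynomial.X ^ 2 ∧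
    (Nat.factorial 1 : ℚ) * (X 1 1).eval 1 = 5 / 12 ∧
    (Nat.factorial 2 : ℚ) * (X 1 2).eval 1 = 1 / 2 := by
  have hb2 : (bernoulli 2 : ℚ) = 1 / 6 := by
    simp [bernoulli, bernoulli'_two]
  -- X 0 3
  have h03 : X 0 3 = Polynomial.C (1 / 6) := by
    have h := hrec 0 3 (by norm_num)
    rw [show (Finset.Icc 1 4 : Finset ℕ) = {1, 2, 3, 4} from by decide] at h
    simp only [Finset.sum_range_succ, Finset.sum_range_zero, Finset.sum_insert, Finset.mem_insert,
      Finset.mem_singleton, Finset.sum_singleton] at h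
    norm_num [chiM] at h
    rw [h]
    simp only [pint, Polynomial.sum_zero_index, mul_zero, add_zero]
  -- X 1 1
  have h11 : X 1 1 = Polynomial.C (-1 / 12) + Polynomial.C (1 / 2) * Polynomial.X := by
    have h := hrec 1 1 (by norm_num)
    rw [show (Finset.Icc 1 2 : Finset ℕ) = {1, 2} from by decide] at h
    simp only [Finset.sum_range_succ, Finset.sum_range_zero, Finset.sum_insert, Finset.mem_insert,
      Finset.mem_singleton, Finset.sum_singleton] at h
    norm_num [chiM, hb2, h03, Nat.factorial] at h
    rw [h, ← Polynomial.C_mul]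
    norm_num [pint_one]
  -- X 0 4
  have h04 : X 0 4 = Polynomial.C (-1 / 24) + Polynomial.C (1 / 8) * Polynomial.X := by
    have h := hrec 0 4 (by norm_num)
    rw [show (Finset.Icc 1 5 : Finset ℕ) = {1, 2, 3, 4, 5} from by decide] at h
    simp only [Finset.sum_range_succ, Finset.sum_range_zero, Finset.sum_insert, Finset.mem_insert,
      Finset.mem_singleton, Finset.sum_singleton] at h
    norm_num [chiM, h03, Nat.factorial] at h
    rw [h, show (9 : Polynomial ℚ) = Polynomial.C 9 from (map_ofNat Polynomial.C 9).symm,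
      ← Polynomial.C_mul, ← Polynomial.C_mul,
      show ((9:ℚ)*(1/6*(1/6))) = 1/4 from by norm_num, pint_C, ← mul_assoc,
      ← Polynomial.C_mul, show ((1:ℚ)/2 * (1/4)) = 1/8 from by norm_num,
      show ((-1:ℚ)/24) = -(1/24) from by norm_num, map_neg]
  -- X 1 2
  have h12 : X 1 2 = Polynomial.C (1 / 24) - Polynomial.C (7 / 24) * Polynomial.X +
      Polynomial.C (1 / 2) * Polynomial.X ^ 2 := by
    have h := hrec 1 2 (by norm_num)
    rw [show (Finset.Icc 1 3 : Finset ℕ) = {1, 2, 3} from by decide] at h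
    simp only [Finset.sum_range_succ, Finset.sum_range_zero, Finset.sum_insert, Finset.mem_insert,
      Finset.mem_singleton, Finset.sum_singleton] at h
    norm_num [chiM, hb2, h03, h04, h11, Nat.factorial] at h
    rw [h, show Polynomial.C (12:ℚ) * (-Polynomial.C (1/24) + Polynomial.C (1/8) * Polynomial.X) +
            (3 * (Polynomial.C ((1:ℚ)/6) * (-Polynomial.C (1/12) + Polynomial.C (1/2) * Polynomial.X)) +
              3 * ((-Polynomial.C ((1:ℚ)/12) + Polynomial.C (1/2) * Polynomial.X) * Polynomial.C (1/6)))
        = Polynomial.C (-7/12) + Polynomial.C 2 * Polynomial.X from by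
      rw [show (3 : Polynomial ℚ) = Polynomial.C 3 from (map_ofNat _ 3).symm]
      ring_nf
      rw [show (2 : Polynomial ℚ) = Polynomial.C 2 from (map_ofNat _ 2).symm]
      simp only [Polynomial.X_mul, mul_right_comm _ Polynomial.X, ← Polynomial.C_mul,
        ← Polynomial.C_neg, ← Polynomial.C_add, ← Polynomial.C_sub]
      norm_num
      rw [show Polynomial.C ((2:ℚ)) = Polynomial.C (1/2) + Polynomial.C (3/2) from by
            rw [← Polynomial.C_add]; norm_num,
          show Polynomial.C ((7:ℚ)/12) = Polynomial.C (1/2) + Polynomial.C (1/12) from by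
            rw [← Polynomial.C_add]; norm_num]
      ring]
    rw [pint_add, pint_C, pint_C_mul_X]
    simp only [mul_add, ← mul_assoc, ← Polynomial.C_mul]
    norm_num
    ring
  refine ⟨h11, h12, ?_, ?_⟩ <;> simp [h11, h12, Nat.factorial] <;> norm_num
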